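/- Let ∅ ⊊ S_1 ⊊ S_2 ⊊ ⋯ ⊊ S_k ⊊ [d] be a chain of subsets of [d]. Then the following are equivalent: (a) there exists a permutation π of [d], with short G-sequence T_1, …, T_{c−1}, such that every partial union T_1 ∪ T_2 ∪ ⋯ ∪ T_j (for 1 ≤ j ≤ c−1) equals some S_i (i.e., the monomial x_{S_1} x_{S_2} ⋯ x_{S_k} lies in the coloring ideal K_G); (b) all of the difference sets S_1, S_2∖S_1, …, S_k∖S_{k−1}, [d]∖S_k are stable sets in G. Consequently, the chain is a face of the coloring complex Δ_G if and only if some difference set contains two adjacent vertices of G. -/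

import Mathlib

/-- `ellSpec G a k p` says that there are positions `i₁ < i₂ < ⋯ < i_p < i_{p+1} = k`
such that `a_{i_j}` and `a_{i_{j+1}}` are adjacent in `G` for all `j`. -/
def ellSpec {d : ℕ} (G : SimpleGraph (Fin d)) (a : Equiv.Perm (Fin d)) (k : Fin d)
    (p : ℕ) : Prop :=
  ∃ c : Fin (p + 1) → Fin d, StrictMono c ∧ c (Fin.last p) = k ∧
    ∀ j : Fin p, G.Adj (a (c j.castSucc)) (a (c j.succ))

/-- `ell G a k` is the largest `p` such that `ellSpec G a k p` holds: the length of the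
longest increasing path in `a` ending at position `k`. -/
noncomputable def ell {d : ℕ} (G : SimpleGraph (Fin d)) (a : Equiv.Perm (Fin d))
    (k : Fin d) : ℕ :=
  sSup {p | ellSpec G a k p}

/-- `j` is a cut of `a` (with respect to `G`): either `j` is the first position, or
comparing with the preceding position `i` we have `ℓ(i) < ℓ(j)`, or `ℓ(i) = ℓ(j)` and
`a_i < a_j`.  (Cuts are located at the first position of each block; this is the
0-indexed version of the paper's cuts `k ∈ [0, d-1]`.) -/
noncomputable def IsCut {d : ℕ} (G : SimpleGraph (Fin d)) (a : Equiv.Perm (Fin d))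
    (j : Fin d) : Prop :=
  (j : ℕ) = 0 ∨ ∃ i : Fin d, (i : ℕ) + 1 = (j : ℕ) ∧
    (ell G a i < ell G a j ∨ (ell G a i = ell G a j ∧ a i < a j))

/-- `c(π)`: the number of cuts of the permutation `a` with respect to `G`. -/
noncomputable def numCuts {d : ℕ} (G : SimpleGraph (Fin d))
    (a : Equiv.Perm (Fin d)) : ℕ :=
  Nat.card {j : Fin d // IsCut G a j}

/-- `χ_G(n)`: the number of proper colorings of `G` with color set `{1, …, n}`. -/
noncomputable def chromVal {d : ℕ} (G : SimpleGraph (Fin d)) (n : ℕ) : ℕ :=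
  Nat.card {φ : Fin d → Fin n // ∀ u v : Fin d, G.Adj u v → φ u ≠ φ v}

/-- The index of the block of the `G`-sequence of `a` containing position `k`:
the number of cuts at positions `≤ k`.  The `j`-th partial union `T_1 ∪ ⋯ ∪ T_j` of
the `G`-sequence of `a` is `{v | blockIdx G a (a.symm v) ≤ j}`. -/
noncomputable def blockIdx {d : ℕ} (G : SimpleGraph (Fin d)) (a : Equiv.Perm (Fin d))
    (k : Fin d) : ℕ :=
  Nat.card {j : Fin d // j ≤ k ∧ IsCut G a j}

namespace ColoringAux

variable {d : ℕ} (G : SimpleGraph (Fin d)) (a : Equiv.Perm (Fin d))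

lemma ellSpec_zero (q : Fin d) : ellSpec G a q 0 := by
  refine ⟨fun _ => q, ?_, rfl, fun j => j.elim0⟩
  intro i j hij
  exact absurd (Fin.lt_def.mp hij) (by have := i.isLt; have := j.isLt; omega)

lemma ellSpec_lt {q : Fin d} {p : ℕ} (h : ellSpec G a q p) : p < d := by
  obtain ⟨c, hm, -, -⟩ := h
  have := Fintype.card_le_of_injective c hm.injective
  simpa using this

lemma bddAbove_ellSpec (q : Fin d) : BddAbove {p | ellSpec G a q p} :=
  ⟨d, fun p hp => (ellSpec_lt G a hp).le⟩

lemma ellSpec_ell (q : Fin d) : ellSpec G a q (ell G a q) := by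
  have := Nat.sSup_mem (s := {p | ellSpec G a q p}) ⟨0, by exact ellSpec_zero G a q⟩
    (bddAbove_ellSpec G a q)
  exact this

lemma le_ell {q : Fin d} {p : ℕ} (h : ellSpec G a q p) : p ≤ ell G a q :=
  le_csSup (bddAbove_ellSpec G a q) h

lemma ellSpec_snoc {p q : Fin d} {m : ℕ} (h : ellSpec G a p m) (hpq : p < q)
    (hadj : G.Adj (a p) (a q)) : ellSpec G a q (m + 1) := by
  obtain ⟨c, hmono, hlast, hadjs⟩ := h
  refine ⟨fun i => if h : (i : ℕ) < m + 1 then c ⟨i, h⟩ else q, ?_, ?_, ?_⟩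
  · intro i j hij
    rw [Fin.lt_def] at hij
    have hi2 := i.isLt; have hj2 := j.isLt
    by_cases hi : (i : ℕ) < m + 1 <;> by_cases hj : (j : ℕ) < m + 1
    · simp only [dif_pos hi, dif_pos hj]
      exact hmono (by rw [Fin.lt_def]; exact hij)
    · simp only [dif_pos hi, dif_neg hj]
      calc c ⟨i, hi⟩ ≤ c (Fin.last m) := hmono.monotone (by rw [Fin.le_def]; simp; omega)
        _ = p := hlast
        _ < q := hpq
    · omega
    · omega
  · have : ¬ ((Fin.last (m+1) : ℕ) < m + 1) := by simp
    simp only [dif_neg this]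
  · intro j
    have hc : ((j.castSucc : Fin (m+2)) : ℕ) = (j : ℕ) := rfl
    have hs : ((j.succ : Fin (m+2)) : ℕ) = (j : ℕ) + 1 := rfl
    have hj2 := j.isLt
    by_cases hj : (j : ℕ) + 1 < m + 1
    · have h1 : ((j.castSucc : Fin (m+2)) : ℕ) < m + 1 := by omega
      have h2 : ((j.succ : Fin (m+2)) : ℕ) < m + 1 := by omega
      simp only [dif_pos h1, dif_pos h2]
      have hj' : (j : ℕ) < m := by omega
      have e1 : (⟨((j.castSucc : Fin (m+2)) : ℕ), h1⟩ : Fin (m+1)) =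
          (⟨(j : ℕ), hj'⟩ : Fin m).castSucc := by ext; simp [hc]
      have e2 : (⟨((j.succ : Fin (m+2)) : ℕ), h2⟩ : Fin (m+1)) =
          (⟨(j : ℕ), hj'⟩ : Fin m).succ := by ext; simp [hs]
      rw [e1, e2]
      exact hadjs _
    · have hj' : (j : ℕ) = m := by omega
      have h1 : ((j.castSucc : Fin (m+2)) : ℕ) < m + 1 := by omega
      have h2 : ¬ ((j.succ : Fin (m+2)) : ℕ) < m + 1 := by omega
      simp only [dif_pos h1, dif_neg h2]
      have e1 : (⟨((j.castSucc : Fin (m+2)) : ℕ), h1⟩ : Fin (m+1)) = Fin.last m := by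
        ext; simp [hc, hj']
      rw [e1, hlast]
      exact hadj

lemma ell_lt_of_adj {p q : Fin d} (hpq : p < q) (hadj : G.Adj (a p) (a q)) :
    ell G a p < ell G a q := by
  have h := ellSpec_snoc G a (ellSpec_ell G a p) hpq hadj
  have := le_ell G a h
  omega

lemma ell_le_of_no_cut (n : ℕ) : ∀ p q : Fin d, (q : ℕ) = (p : ℕ) + n →
    (∀ r : Fin d, (p : ℕ) < (r : ℕ) → (r : ℕ) ≤ (q : ℕ) → ¬ IsCut G a r) →
    ell G a q ≤ ell G a p := by
  induction n with
  | zero => intro p q hq _; have : q = p := Fin.ext (by omega); rw [this]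
  | succ n ih =>
    intro p q hq hnc
    have hq2 := q.isLt
    have hql : (p : ℕ) + n < d := by omega
    have hqv : ((⟨(p : ℕ) + n, hql⟩ : Fin d) : ℕ) = (p : ℕ) + n := rfl
    have hcut := hnc q (by omega) (le_refl _)
    rw [IsCut] at hcut
    push_neg at hcut
    obtain ⟨h0, h1⟩ := hcut
    have h2 := h1 ⟨(p : ℕ) + n, hql⟩ (by omega)
    have h3 : ell G a q ≤ ell G a ⟨(p : ℕ) + n, hql⟩ := h2.1
    have h4 := ih p ⟨(p : ℕ) + n, hql⟩ rfl
      (fun r h5 h6 => hnc r h5 (by rw [hqv] at h6; omega))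
    omega

lemma blockIdx_eq_ncard (p : Fin d) :
    blockIdx G a p = {r : Fin d | r ≤ p ∧ IsCut G a r}.ncard := by
  rw [blockIdx, ← Nat.card_coe_set_eq]
  rfl

lemma blockIdx_mono {p q : Fin d} (h : p ≤ q) : blockIdx G a p ≤ blockIdx G a q := by
  rw [blockIdx_eq_ncard, blockIdx_eq_ncard]
  exact Set.ncard_le_ncard (fun r hr => ⟨hr.1.trans h, hr.2⟩) (Set.toFinite _)

lemma isCut_zero (hd : 0 < d) : IsCut G a ⟨0, hd⟩ := Or.inl rfl

lemma one_le_blockIdx (p : Fin d) : 1 ≤ blockIdx G a p := by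
  have hd : 0 < d := p.pos
  rw [blockIdx]
  have : Nonempty {j : Fin d // j ≤ p ∧ IsCut G a j} :=
    ⟨⟨⟨0, hd⟩, by rw [Fin.le_def]; exact Nat.zero_le _, isCut_zero G a hd⟩⟩
  exact Nat.card_pos

lemma blockIdx_le_numCuts (p : Fin d) : blockIdx G a p ≤ numCuts G a := by
  rw [blockIdx, numCuts]
  exact Nat.card_le_card_of_injective
    (fun x => ⟨x.1, x.2.2⟩) (fun x y hxy => Subtype.ext (by simpa using hxy))

lemma blockIdx_zero {p : Fin d} (hp : (p : ℕ) = 0) : blockIdx G a p = 1 := by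
  rw [blockIdx_eq_ncard]
  have : {r : Fin d | r ≤ p ∧ IsCut G a r} = {p} := by
    ext r
    simp only [Set.mem_setOf_eq, Set.mem_singleton_iff]
    constructor
    · rintro ⟨h1, -⟩
      rw [Fin.le_def] at h1
      exact Fin.ext (by omega)
    · rintro rfl
      exact ⟨le_refl _, Or.inl hp⟩
  rw [this, Set.ncard_singleton]

lemma blockIdx_lt_of_cut {p q : Fin d} (hpq : p < q) (hq : IsCut G a q) :
    blockIdx G a p < blockIdx G a q := by
  rw [blockIdx_eq_ncard, blockIdx_eq_ncard]
  have hsub : insert q {r : Fin d | r ≤ p ∧ IsCut G a r} ⊆ {r : Fin d | r ≤ q ∧ IsCut G a r} := by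
    rintro r (rfl | hr)
    · exact ⟨le_refl _, hq⟩
    · exact ⟨hr.1.trans hpq.le, hr.2⟩
  have hnm : q ∉ {r : Fin d | r ≤ p ∧ IsCut G a r} := fun h => absurd h.1 (not_le.mpr hpq)
  have := Set.ncard_le_ncard hsub (Set.toFinite _)
  rw [Set.ncard_insert_of_notMem hnm] at this
  omega

lemma blockIdx_succ_le {i q : Fin d} (h : (i : ℕ) + 1 = (q : ℕ)) :
    blockIdx G a q ≤ blockIdx G a i + 1 := by
  rw [blockIdx_eq_ncard, blockIdx_eq_ncard]
  have hsub : {r : Fin d | r ≤ q ∧ IsCut G a r} ⊆ insert q {r : Fin d | r ≤ i ∧ IsCut G a r} := by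
    rintro r ⟨h1, h2⟩
    rw [Fin.le_def] at h1
    by_cases hr : r = q
    · exact Or.inl hr
    · have : (r : ℕ) ≠ (q : ℕ) := fun hc => hr (Fin.ext hc)
      exact Or.inr ⟨by rw [Fin.le_def]; omega, h2⟩
  have := Set.ncard_le_ncard hsub (Set.toFinite _)
  have h2 := Set.ncard_insert_le q {r : Fin d | r ≤ i ∧ IsCut G a r}
  omega

lemma blockIdx_eq_of_not_cut {i q : Fin d} (h : (i : ℕ) + 1 = (q : ℕ)) (hq : ¬ IsCut G a q) :
    blockIdx G a q = blockIdx G a i := by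
  rw [blockIdx_eq_ncard, blockIdx_eq_ncard]
  congr 1
  ext r
  simp only [Set.mem_setOf_eq]
  constructor
  · rintro ⟨h1, h2⟩
    rw [Fin.le_def] at h1
    have : r ≠ q := fun hc => hq (hc ▸ h2)
    have : (r : ℕ) ≠ (q : ℕ) := fun hc => this (Fin.ext hc)
    exact ⟨by rw [Fin.le_def]; omega, h2⟩
  · rintro ⟨h1, h2⟩
    rw [Fin.le_def] at h1 ⊢
    exact ⟨by omega, h2⟩

/-- Key Lemma A: two positions in the same block carry non-adjacent vertices. -/
lemma not_adj_of_blockIdx_eq {p q : Fin d} (h : blockIdx G a p = blockIdx G a q) :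
    ¬ G.Adj (a p) (a q) := by
  have key : ∀ p q : Fin d, p < q → blockIdx G a p = blockIdx G a q → ¬ G.Adj (a p) (a q) := by
    intro p q hpq hbi hadj
    have hnc : ∀ r : Fin d, (p : ℕ) < (r : ℕ) → (r : ℕ) ≤ (q : ℕ) → ¬ IsCut G a r := by
      intro r h1 h2 hcut
      have h3 : blockIdx G a p < blockIdx G a r :=
        blockIdx_lt_of_cut G a (by rw [Fin.lt_def]; omega) hcut
      have h4 : blockIdx G a r ≤ blockIdx G a q :=
        blockIdx_mono G a (by rw [Fin.le_def]; omega)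
      omega
    have h5 := ell_le_of_no_cut G a ((q : ℕ) - (p : ℕ)) p q
      (by have := Fin.lt_def.mp hpq; omega) hnc
    have h6 := ell_lt_of_adj G a hpq hadj
    omega
  rcases lt_trichotomy p q with h1 | h1 | h1
  · exact key p q h1 h
  · rw [h1]; exact fun hadj => G.irrefl hadj
  · exact fun hadj => key q p h1 h.symm hadj.symm

/-! ### Chain machinery -/

section Chain

variable {k : ℕ} (S : ℕ → Set (Fin d))

lemma Smono (hchain : ∀ i, i ≤ k → S i ⊂ S (i + 1)) :
    ∀ j, j ≤ k + 1 → ∀ i, i ≤ j → S i ⊆ S j := by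
  intro j
  induction j with
  | zero => intro _ i hi; interval_cases i; exact le_refl _
  | succ j ih =>
    intro hj i hi
    rcases Nat.eq_or_lt_of_le hi with rfl | hlt
    · exact le_refl _
    · exact (ih (by omega) i (by omega)).trans (hchain j (by omega)).subset

/-- the index of the difference block containing `v`. -/
noncomputable def fIdx (v : Fin d) : ℕ := sSup {i | i ≤ k ∧ v ∉ S i}

lemma fIdx_mem (hS0 : S 0 = ∅) (v : Fin d) : fIdx (k := k) S v ≤ k ∧ v ∉ S (fIdx (k := k) S v) := by
  have h := Nat.sSup_mem (s := {i | i ≤ k ∧ v ∉ S i})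
    ⟨0, by simp [hS0]⟩ ⟨k, fun x hx => hx.1⟩
  exact h

lemma fIdx_le (hS0 : S 0 = ∅) (v : Fin d) : fIdx (k := k) S v ≤ k := (fIdx_mem S hS0 v).1

lemma fIdx_not_mem (hS0 : S 0 = ∅) (v : Fin d) : v ∉ S (fIdx (k := k) S v) := (fIdx_mem S hS0 v).2

lemma fIdx_mem_succ (hS0 : S 0 = ∅) (hSl : S (k + 1) = Set.univ) (v : Fin d) : v ∈ S (fIdx (k := k) S v + 1) := by
  by_cases h : fIdx (k := k) S v = k
  · rw [h, hSl]; trivial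
  · by_contra hc
    have hle : fIdx (k := k) S v + 1 ≤ sSup {i | i ≤ k ∧ v ∉ S i} :=
      le_csSup ⟨k, fun x hx => hx.1⟩ ⟨by have := fIdx_le (k := k) S hS0 v; omega, hc⟩
    have : fIdx (k := k) S v + 1 ≤ fIdx (k := k) S v := hle
    omega

lemma mem_iff_fIdx_lt (hS0 : S 0 = ∅) (hSl : S (k + 1) = Set.univ)
    (hchain : ∀ i, i ≤ k → S i ⊂ S (i + 1)) {m : ℕ} (hm : m ≤ k + 1) (v : Fin d) :
    v ∈ S m ↔ fIdx (k := k) S v < m := by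
  constructor
  · intro hv
    by_contra hc
    push_neg at hc
    exact fIdx_not_mem (k := k) S hS0 v
      (Smono (k := k) S hchain _ (by have := fIdx_le (k := k) S hS0 v; omega) m hc hv)
  · intro h
    exact Smono (k := k) S hchain m hm _ h (fIdx_mem_succ (k := k) S hS0 hSl v)

end Chain

/-! ### lam : longest `fIdx`-increasing path -/

section Lam

variable {k : ℕ} (S : ℕ → Set (Fin d))

/-- `lamSpec` : there is a `G`-path ending at `v` along which `fIdx` strictly increases. -/
def lamSpec (v : Fin d) (m : ℕ) : Prop :=
  ∃ u : Fin (m + 1) → Fin d, StrictMono (fun j => fIdx (k := k) S (u j)) ∧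
    u (Fin.last m) = v ∧ ∀ j : Fin m, G.Adj (u j.castSucc) (u j.succ)

noncomputable def lam (v : Fin d) : ℕ := sSup {m | lamSpec G (k := k) S v m}

lemma strictMono_fin_bound {n : ℕ} (g : Fin (n + 1) → ℕ) (hg : StrictMono g) :
    g 0 + n ≤ g (Fin.last n) := by
  have h : ∀ j : Fin (n + 1), g 0 + (j : ℕ) ≤ g j := by
    intro j
    induction j using Fin.induction with
    | zero => simp
    | succ i ih =>
      have h1 : g i.castSucc < g i.succ := hg (Fin.castSucc_lt_succ (i := i))
      have h2 : ((i.succ : Fin (n+1)) : ℕ) = (i : ℕ) + 1 := rfl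
      have h3 : ((i.castSucc : Fin (n+1)) : ℕ) = (i : ℕ) := rfl
      rw [h2]; rw [h3] at ih; omega
  have := h (Fin.last n)
  simpa using this

lemma lamSpec_zero (v : Fin d) : lamSpec G (k := k) S v 0 := by
  refine ⟨fun _ => v, ?_, rfl, fun j => j.elim0⟩
  intro i j hij
  exact absurd (Fin.lt_def.mp hij) (by have := i.isLt; have := j.isLt; omega)

lemma lamSpec_le (hS0 : S 0 = ∅) {v : Fin d} {m : ℕ} (h : lamSpec G (k := k) S v m) : m ≤ k := by
  obtain ⟨u, hmono, hlast, -⟩ := h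
  have h1 := strictMono_fin_bound _ hmono
  have h2 : fIdx (k := k) S (u (Fin.last m)) ≤ k := fIdx_le (k := k) S hS0 _
  have h1' : fIdx (k := k) S (u 0) + m ≤ fIdx (k := k) S (u (Fin.last m)) := h1
  omega

lemma lamSpec_lam (hS0 : S 0 = ∅) (v : Fin d) : lamSpec G (k := k) S v (lam G (k := k) S v) := by
  have := Nat.sSup_mem (s := {m | lamSpec G (k := k) S v m})
    ⟨0, by exact lamSpec_zero G S v⟩ ⟨k, fun x hx => lamSpec_le G S hS0 hx⟩
  exact this

lemma le_lam (hS0 : S 0 = ∅) {v : Fin d} {m : ℕ} (h : lamSpec G (k := k) S v m) :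
    m ≤ lam G (k := k) S v :=
  le_csSup ⟨k, fun x hx => lamSpec_le G S hS0 hx⟩ h

lemma lam_le (hS0 : S 0 = ∅) (v : Fin d) : lam G (k := k) S v ≤ k :=
  lamSpec_le G S hS0 (lamSpec_lam G S hS0 v)

end Lam

/-! ### The key encoding and the sorted permutation -/

section Key

variable {k : ℕ} (S : ℕ → Set (Fin d))

/-- two-digit lexicographic comparison -/
lemma lex2 {B x1 y1 x2 y2 : ℕ} (h1 : y1 < B) (h2 : y2 < B)
    (h : y1 + B * x1 < y2 + B * x2) : x1 < x2 ∨ (x1 = x2 ∧ y1 < y2) := by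
  rcases lt_trichotomy x1 x2 with h' | h' | h'
  · exact Or.inl h'
  · subst h'; right; exact ⟨rfl, by omega⟩
  · exfalso
    have hm : B * (x2 + 1) ≤ B * x1 := Nat.mul_le_mul_left B h'
    have he : B * (x2 + 1) = B * x2 + B := by ring
    omega

lemma lex2eq {B x1 y1 x2 y2 : ℕ} (h1 : y1 < B) (h2 : y2 < B)
    (h : y1 + B * x1 = y2 + B * x2) : x1 = x2 ∧ y1 = y2 := by
  rcases lt_trichotomy x1 x2 with h' | h' | h'
  · exfalso
    have hm : B * (x1 + 1) ≤ B * x2 := Nat.mul_le_mul_left B h'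
    have he : B * (x1 + 1) = B * x1 + B := by ring
    omega
  · subst h'; exact ⟨rfl, by omega⟩
  · exfalso
    have hm : B * (x2 + 1) ≤ B * x1 := Nat.mul_le_mul_left B h'
    have he : B * (x2 + 1) = B * x2 + B := by ring
    omega

noncomputable def key (v : Fin d) : ℕ :=
  (d - 1 - (v : ℕ)) + d * ((k - lam G (k := k) S v) + (k + 1) * fIdx (k := k) S v)

variable (hS0 : S 0 = ∅)

lemma key_fst_lt (v : Fin d) : d - 1 - (v : ℕ) < d := by
  have := v.isLt; omega

lemma key_snd_lt (v : Fin d) : k - lam G (k := k) S v < k + 1 := by omega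

lemma key_lt_of_fIdx_lt {u w : Fin d}
    (h : fIdx (k := k) S u < fIdx (k := k) S w) :
    key G (k := k) S u < key G (k := k) S w := by
  have h1 := key_fst_lt (d := d) (v := u)
  have h1' := key_fst_lt (d := d) (v := w)
  have h2 := key_snd_lt G (k := k) S u
  have h2' := key_snd_lt G (k := k) S w
  set zu := k - lam G (k := k) S u
  set zw := k - lam G (k := k) S w
  set fu := fIdx (k := k) S u
  set fw := fIdx (k := k) S w
  have e1 : (k+1) * (fu + 1) ≤ (k+1) * fw := Nat.mul_le_mul_left _ (by omega)
  have e2 : (k+1) * (fu + 1) = (k+1) * fu + (k+1) := by ring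
  have e3 : d * (zu + (k+1) * fu + 1) ≤ d * (zw + (k+1) * fw) :=
    Nat.mul_le_mul_left _ (by omega)
  have e4 : d * (zu + (k+1) * fu + 1) = d * (zu + (k+1) * fu) + d := by ring
  show (d - 1 - (u : ℕ)) + d * (zu + (k+1) * fu) < (d - 1 - (w : ℕ)) + d * (zw + (k+1) * fw)
  omega

lemma key_decode (hS0 : S 0 = ∅) {u w : Fin d} (h : key G (k := k) S u < key G (k := k) S w) :
    fIdx (k := k) S u < fIdx (k := k) S w ∨
    (fIdx (k := k) S u = fIdx (k := k) S w ∧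
      lam G (k := k) S w < lam G (k := k) S u) ∨
    (fIdx (k := k) S u = fIdx (k := k) S w ∧
      lam G (k := k) S u = lam G (k := k) S w ∧ (w : ℕ) < (u : ℕ)) := by
  have h1 := key_fst_lt (d := d) (v := u)
  have h1' := key_fst_lt (d := d) (v := w)
  have h2 := key_snd_lt G (k := k) S u
  have h2' := key_snd_lt G (k := k) S w
  have hlu := lam_le (k := k) G S hS0 u
  have hlw := lam_le (k := k) G S hS0 w
  have hu := u.isLt
  have hw := w.isLt
  rcases lex2 h1 h1' h with h3 | ⟨h3, h4⟩
  · rcases lex2 h2 h2' h3 with h5 | ⟨h5, h6⟩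
    · exact Or.inl h5
    · exact Or.inr (Or.inl ⟨h5, by omega⟩)
  · obtain ⟨h5, h6⟩ := lex2eq h2 h2' h3
    exact Or.inr (Or.inr ⟨h5, by omega, by omega⟩)

lemma key_injective : Function.Injective (key G (k := k) S) := by
  intro u w h
  have h1 := key_fst_lt (d := d) (v := u)
  have h1' := key_fst_lt (d := d) (v := w)
  obtain ⟨-, h4⟩ := lex2eq h1 h1' h
  have hu := u.isLt
  have hw := w.isLt
  exact Fin.ext (by omega)

/-- the sorting permutation -/
noncomputable def perm : Equiv.Perm (Fin d) := Tuple.sort (key G (k := k) S)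

lemma perm_strictMono : StrictMono (key G (k := k) S ∘ perm G (k := k) S) :=
  (Tuple.monotone_sort (key G (k := k) S)).strictMono_of_injective
    ((key_injective G S).comp (Equiv.injective _))

lemma key_lt_iff {u w : Fin d} :
    key G (k := k) S u < key G (k := k) S w ↔
      (perm G (k := k) S).symm u < (perm G (k := k) S).symm w := by
  constructor
  · intro h
    have h2 : (key G (k := k) S ∘ (perm G (k := k) S)) ((perm G (k := k) S).symm u) <
        (key G (k := k) S ∘ (perm G (k := k) S)) ((perm G (k := k) S).symm w) := by
      simp only [Function.comp_apply, Equiv.apply_symm_apply]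
      exact h
    exact (perm_strictMono G S).lt_iff_lt.mp h2
  · intro h
    have := perm_strictMono (k := k) G S h
    simpa [Function.comp, Equiv.apply_symm_apply] using this

lemma fIdx_perm_mono (hS0 : S 0 = ∅) {p q : Fin d} (hpq : p ≤ q) :
    fIdx (k := k) S (perm G (k := k) S p) ≤ fIdx (k := k) S (perm G (k := k) S q) := by
  rcases eq_or_lt_of_le hpq with rfl | hlt
  · exact le_refl _
  · have hkey : key G (k := k) S (perm G (k := k) S p) <
        key G (k := k) S (perm G (k := k) S q) := perm_strictMono G S hlt
    rcases key_decode (k := k) G S hS0 hkey with h | ⟨h, -⟩ | ⟨h, -⟩ <;> omega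

end Key

/-! ### ell = lam for the sorted permutation, and cuts are block boundaries -/

section Main

variable {k : ℕ} (S : ℕ → Set (Fin d))
  (hS0 : S 0 = ∅) (hSl : S (k + 1) = Set.univ)
  (hchain : ∀ i, i ≤ k → S i ⊂ S (i + 1))
  (hb : ∀ i, i ≤ k → ∀ u ∈ S (i + 1) \ S i, ∀ v ∈ S (i + 1) \ S i, ¬ G.Adj u v)

lemma fIdx_ne_of_adj (hS0 : S 0 = ∅) (hSl : S (k + 1) = Set.univ)
    (hb : ∀ i, i ≤ k → ∀ u ∈ S (i + 1) \ S i, ∀ v ∈ S (i + 1) \ S i, ¬ G.Adj u v)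
    {u w : Fin d} (hadj : G.Adj u w) : fIdx (k := k) S u ≠ fIdx (k := k) S w := by
  intro heq
  have h1 : u ∈ S (fIdx (k := k) S u + 1) \ S (fIdx (k := k) S u) :=
    ⟨fIdx_mem_succ (k := k) S hS0 hSl u, fIdx_not_mem (k := k) S hS0 u⟩
  have h2 : w ∈ S (fIdx (k := k) S u + 1) \ S (fIdx (k := k) S u) := by
    rw [heq]
    exact ⟨fIdx_mem_succ (k := k) S hS0 hSl w, fIdx_not_mem (k := k) S hS0 w⟩
  exact hb _ (fIdx_le (k := k) S hS0 u) u h1 w h2 hadj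

lemma ell_eq_lam (hS0 : S 0 = ∅) (hSl : S (k + 1) = Set.univ)
    (hb : ∀ i, i ≤ k → ∀ u ∈ S (i + 1) \ S i, ∀ v ∈ S (i + 1) \ S i, ¬ G.Adj u v)
    (q : Fin d) :
    ell G (perm G (k := k) S) q = lam G (k := k) S (perm G (k := k) S q) := by
  set a := perm G (k := k) S with ha
  apply le_antisymm
  · obtain ⟨c, hm, hlast, hadj⟩ := ellSpec_ell G a q
    apply le_lam G S hS0
    refine ⟨fun j => a (c j), ?_, by show a (c (Fin.last _)) = a q; rw [hlast], hadj⟩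
    rw [Fin.strictMono_iff_lt_succ]
    intro i
    show fIdx (k := k) S (a (c i.castSucc)) < fIdx (k := k) S (a (c i.succ))
    have hle : fIdx (k := k) S (a (c i.castSucc)) ≤ fIdx (k := k) S (a (c i.succ)) :=
      fIdx_perm_mono G S hS0 (hm (Fin.castSucc_lt_succ (i := i))).le
    have hne := fIdx_ne_of_adj G S hS0 hSl hb (hadj i)
    omega
  · obtain ⟨u, hmf, hlast, hadj⟩ := lamSpec_lam G S hS0 (a q)
    apply le_ell G a
    refine ⟨fun j => a.symm (u j), ?_,
      by show a.symm (u (Fin.last _)) = q; rw [hlast, Equiv.symm_apply_apply], ?_⟩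
    · intro i j hij
      show a.symm (u i) < a.symm (u j)
      have h1 : fIdx (k := k) S (u i) < fIdx (k := k) S (u j) := hmf hij
      have h2 := key_lt_of_fIdx_lt G S h1
      rw [key_lt_iff] at h2
      exact h2
    · intro j
      have e : ∀ x, a (a.symm x) = x := Equiv.apply_symm_apply a
      simpa [e] using hadj j

lemma cut_boundary (hS0 : S 0 = ∅) (hSl : S (k + 1) = Set.univ)
    (hb : ∀ i, i ≤ k → ∀ u ∈ S (i + 1) \ S i, ∀ v ∈ S (i + 1) \ S i, ¬ G.Adj u v)
    {i q : Fin d} (hiq : (i : ℕ) + 1 = (q : ℕ))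
    (hcut : IsCut G (perm G (k := k) S) q) :
    fIdx (k := k) S (perm G (k := k) S i) < fIdx (k := k) S (perm G (k := k) S q) := by
  set a := perm G (k := k) S with ha
  rcases hcut with h0 | ⟨i', hi', hor⟩
  · omega
  · have hii : i' = i := Fin.ext (by omega)
    rw [hii] at hor
    have hkey : key G (k := k) S (a i) < key G (k := k) S (a q) :=
      perm_strictMono (k := k) G S (by rw [Fin.lt_def]; omega)
    have he1 : ell G a i = lam G (k := k) S (a i) := ell_eq_lam G S hS0 hSl hb i
    have he2 : ell G a q = lam G (k := k) S (a q) := ell_eq_lam G S hS0 hSl hb q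
    rcases key_decode (k := k) G S hS0 hkey with h | ⟨h, h2⟩ | ⟨h, h2, h3⟩
    · exact h
    · exfalso
      rcases hor with h4 | ⟨h4, -⟩ <;> omega
    · exfalso
      rcases hor with h4 | ⟨h4, h5⟩
      · omega
      · rw [Fin.lt_def] at h5; omega

end Main

/-! ### existence of the (j+1)-st cut -/

section Cuts

variable {d : ℕ} (G : SimpleGraph (Fin d)) (a : Equiv.Perm (Fin d))

lemma blockIdx_last (hd : 1 ≤ d) : blockIdx G a ⟨d - 1, by omega⟩ = numCuts G a := by
  rw [blockIdx, numCuts]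
  apply Nat.card_congr
  apply Equiv.subtypeEquivRight
  intro x
  simp only [and_iff_right_iff_imp]
  intro _
  rw [Fin.le_def]
  show (x : ℕ) ≤ d - 1
  have := x.isLt
  omega

lemma exists_cut (hd : 1 ≤ d) {j : ℕ} (hj : 1 ≤ j) (hjc : j + 1 ≤ numCuts G a) :
    ∃ q : Fin d, IsCut G a q ∧ blockIdx G a q = j + 1 ∧ 1 ≤ (q : ℕ) := by
  classical
  set T : Finset (Fin d) := Finset.univ.filter (fun p => j + 1 ≤ blockIdx G a p) with hT
  have hTne : T.Nonempty := by
    refine ⟨⟨d - 1, by omega⟩, ?_⟩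
    rw [hT, Finset.mem_filter]
    exact ⟨Finset.mem_univ _, by rw [blockIdx_last G a hd]; exact hjc⟩
  set q := T.min' hTne with hq
  have hqmem : j + 1 ≤ blockIdx G a q := by
    have h : q ∈ Finset.filter (fun p => j + 1 ≤ blockIdx G a p) Finset.univ := T.min'_mem hTne
    exact (Finset.mem_filter.mp h).2
  have hqmin : ∀ p : Fin d, j + 1 ≤ blockIdx G a p → q ≤ p := by
    intro p hp
    exact T.min'_le p (Finset.mem_filter.mpr ⟨Finset.mem_univ _, hp⟩)
  have hq0 : 1 ≤ (q : ℕ) := by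
    by_contra hc
    have : (q : ℕ) = 0 := by omega
    rw [blockIdx_zero G a this] at hqmem
    omega
  have hql := q.isLt
  set i : Fin d := ⟨(q : ℕ) - 1, by omega⟩ with hi
  have hiv : (i : ℕ) + 1 = (q : ℕ) := by rw [hi]; simp; omega
  have hilt : blockIdx G a i ≤ j := by
    by_contra hc
    have h1 := hqmin i (by omega)
    rw [Fin.le_def] at h1
    simp [hi] at h1
    omega
  have hcut : IsCut G a q := by
    by_contra hc
    have := blockIdx_eq_of_not_cut G a hiv hc
    omega
  have := blockIdx_succ_le G a hiv
  exact ⟨q, hcut, by omega, hq0⟩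

lemma blockIdx_le_iff {j : ℕ} {q : Fin d} (hcut : IsCut G a q)
    (hbq : blockIdx G a q = j + 1) (p : Fin d) :
    blockIdx G a p ≤ j ↔ p < q := by
  constructor
  · intro h
    by_contra hc
    push_neg at hc
    have := blockIdx_mono G a hc
    omega
  · intro h
    have := blockIdx_lt_of_cut G a h hcut
    omega

end Cuts

end ColoringAux

open ColoringAux in
/-- Let `∅ ⊊ S 1 ⊊ ⋯ ⊊ S k ⊊ [d]` be a chain (encoded by
`S : ℕ → Set (Fin d)` with `S 0 = ∅` and `S (k+1) = univ`).  Then the following are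
equivalent: (a) there is a permutation `a` all of whose short-`G`-sequence partial
unions `T_1 ∪ ⋯ ∪ T_j` (for `1 ≤ j ≤ c(a) − 1`) occur among the `S i`
(i.e. `x_{S 1} ⋯ x_{S k}` lies in the coloring ideal `K_G`); (b) all the difference
sets `S 1, S 2 ∖ S 1, …, [d] ∖ S k` are stable in `G`.  Consequently the chain is a
face of the coloring complex `Δ_G` iff some difference set contains two adjacent
vertices. -/
theorem coloring_ideal_membership_iff_stable_differences {d k : ℕ} (hd : 1 ≤ d)
    (hk : 1 ≤ k) (G : SimpleGraph (Fin d)) (S : ℕ → Set (Fin d))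
    (hS0 : S 0 = ∅) (hSl : S (k + 1) = Set.univ)
    (hchain : ∀ i, i ≤ k → S i ⊂ S (i + 1)) :
    ((∃ a : Equiv.Perm (Fin d), ∀ j : ℕ, 1 ≤ j → j + 1 ≤ numCuts G a →
        ∃ i, 1 ≤ i ∧ i ≤ k ∧ S i = {v : Fin d | blockIdx G a (a.symm v) ≤ j}) ↔
      (∀ i, i ≤ k → ∀ u ∈ S (i + 1) \ S i, ∀ v ∈ S (i + 1) \ S i, ¬ G.Adj u v)) ∧
    (¬ (∃ a : Equiv.Perm (Fin d), ∀ j : ℕ, 1 ≤ j → j + 1 ≤ numCuts G a →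
        ∃ i, 1 ≤ i ∧ i ≤ k ∧ S i = {v : Fin d | blockIdx G a (a.symm v) ≤ j}) ↔
      (∃ i ≤ k, ∃ u v, G.Adj u v ∧ u ∈ S (i + 1) \ S i ∧ v ∈ S (i + 1) \ S i)) := by
  classical
  have main : (∃ a : Equiv.Perm (Fin d), ∀ j : ℕ, 1 ≤ j → j + 1 ≤ numCuts G a →
        ∃ i, 1 ≤ i ∧ i ≤ k ∧ S i = {v : Fin d | blockIdx G a (a.symm v) ≤ j}) ↔
      (∀ i, i ≤ k → ∀ u ∈ S (i + 1) \ S i, ∀ v ∈ S (i + 1) \ S i, ¬ G.Adj u v) := by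
    constructor
    · rintro ⟨a, ha⟩ i hi u hu v hv hadj
      have key2 : ∀ u v : Fin d, u ∈ S (i + 1) \ S i → v ∈ S (i + 1) \ S i → G.Adj u v →
          blockIdx G a (a.symm u) < blockIdx G a (a.symm v) → False := by
        intro u v hu hv hadj hlt
        obtain ⟨m, hm1, hmk, hSm⟩ := ha (blockIdx G a (a.symm u))
          (one_le_blockIdx G a _)
          (le_trans (by omega) (blockIdx_le_numCuts G a (a.symm v)))
        have hu' : u ∈ S m := by
          rw [hSm]; exact Set.mem_setOf.mpr (le_refl _)
        have hv' : v ∉ S m := by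
          rw [hSm]; simp only [Set.mem_setOf_eq]; omega
        rcases le_or_gt m i with hmi | hmi
        · exact hu.2 (Smono (k := k) S hchain i (by omega) m hmi hu')
        · exact hv' (Smono (k := k) S hchain m (by omega) (i + 1) (by omega) hv.1)
      rcases lt_trichotomy (blockIdx G a (a.symm u)) (blockIdx G a (a.symm v)) with h1 | h1 | h1
      · exact key2 u v hu hv hadj h1
      · have h2 := not_adj_of_blockIdx_eq G a h1
        simp only [Equiv.apply_symm_apply] at h2
        exact h2 hadj
      · exact key2 v u hv hu hadj.symm h1
    · intro hb
      refine ⟨perm G (k := k) S, ?_⟩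
      set a := perm G (k := k) S with ha
      intro j hj hjc
      obtain ⟨q, hqcut, hqb, hq1⟩ := exists_cut G a hd hj hjc
      have hql := q.isLt
      set i0 : Fin d := ⟨(q : ℕ) - 1, by omega⟩ with hi0
      have hi0v : ((i0 : Fin d) : ℕ) + 1 = (q : ℕ) := by rw [hi0]; simp; omega
      have hbd : fIdx (k := k) S (a i0) < fIdx (k := k) S (a q) :=
        cut_boundary G S hS0 hSl hb hi0v hqcut
      refine ⟨fIdx (k := k) S (a q), by omega, fIdx_le (k := k) S hS0 _, ?_⟩
      ext v
      rw [mem_iff_fIdx_lt (k := k) S hS0 hSl hchain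
        (by have := fIdx_le (k := k) S hS0 (a q); omega) v]
      simp only [Set.mem_setOf_eq]
      rw [blockIdx_le_iff G a hqcut hqb]
      constructor
      · intro h
        have h2 := key_lt_of_fIdx_lt (k := k) G S h
        rw [key_lt_iff] at h2
        rwa [← ha, Equiv.symm_apply_apply] at h2
      · intro h
        have h2 : a.symm v ≤ i0 := by
          rw [Fin.le_def] at *
          rw [Fin.lt_def] at h
          show ((a.symm v : Fin d) : ℕ) ≤ (q : ℕ) - 1
          omega
        have h3 := fIdx_perm_mono (k := k) G S hS0 h2
        rw [← ha, Equiv.apply_symm_apply] at h3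
        omega
  refine ⟨main, ?_⟩
  rw [main]
  push_neg
  constructor
  · rintro ⟨i, hik, u, hu, v, hv, hadj⟩
    exact ⟨i, hik, u, v, hadj, hu, hv⟩
  · rintro ⟨i, hik, u, v, hadj, hu, hv⟩
    exact ⟨i, hik, u, hu, v, hv, hadj⟩
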